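/- For every α > 0 there exists ε > 0 such that the following holds for every r ≥ 1: if A, B ⊆ F_2^r are nonempty sets that are (1−ε)-approximate dual, then there exist nonempty subsets A' ⊆ A, B' ⊆ B and a value c ∈ F_2 with ⟨a,b⟩ = c for all a ∈ A', b ∈ B', and satisfying |A| ≤ 2^{α·r}·|A'| and |B| ≤ 2^{α·r}·|B'|. -/

import Mathlib

set_option maxHeartbeats 1000000

open Finset Module Real

private noncomputable def lf {r : ℕ} (a : Fin r → ZMod 2) (c : ZMod 2) :
    ((Fin r → ZMod 2) × ZMod 2) →ₗ[ZMod 2] ZMod 2 where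
  toFun x := (∑ i, a i * x.1 i) + c * x.2
  map_add' x y := by
    simp [mul_add, Finset.sum_add_distrib]; ring
  map_smul' m x := by
    simp [Finset.mul_sum, mul_add, smul_eq_mul, mul_comm, mul_left_comm]

private lemma eq_of_add_eq_zero {x c : ZMod 2} (h : x + c = 0) : x = c := by
  have h2 : c + c = 0 := CharTwo.add_self_eq_zero c
  have h3 : x + c + c = c := by rw [h]; ring
  rwa [add_assoc, h2, add_zero] at h3

private lemma core {r : ℕ} (B : Finset (Fin r → ZMod 2)) (hBne : B.Nonempty)
    (c : ZMod 2) (ε : ℝ) (hε0 : 0 ≤ ε) (hε1 : ε ≤ 1/16) :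
    ∀ k : ℕ, ∀ (A' : Finset (Fin r → ZMod 2))
      (S : Finset ((Fin r → ZMod 2) × ZMod 2)),
      A'.Nonempty →
      (∀ a ∈ A', ((B.filter (fun b => ¬ (∑ i, a i * b i) = c)).card : ℝ) ≤ 2*ε*B.card) →
      (∀ a ∈ A', ∀ s ∈ S, lf a c s = 0) →
      r + 1 ≤ Module.finrank (ZMod 2) (Submodule.span (ZMod 2) (S : Set ((Fin r → ZMod 2) × ZMod 2))) + k →
      ∃ A'' B'', A'' ⊆ A' ∧ B'' ⊆ B ∧ A''.Nonempty ∧ B''.Nonempty ∧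
        (∀ a ∈ A'', ∀ b ∈ B'', (∑ i, a i * b i) = c) ∧
        ((1-4*ε)^k * (A'.card:ℝ) ≤ A''.card) ∧ ((B.card:ℝ) ≤ 2 * B''.card) := by
  classical
  intro k
  induction k with
  | zero =>
    intro A' S hA'ne hrows horth hrank
    -- span S = ⊤
    have hfr : Module.finrank (ZMod 2) ((Fin r → ZMod 2) × ZMod 2) = r + 1 := by
      simp [Module.finrank_prod]
    have hle : Module.finrank (ZMod 2) (Submodule.span (ZMod 2) (S : Set ((Fin r → ZMod 2) × ZMod 2))) ≤ r + 1 := by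
      rw [← hfr]; exact Submodule.finrank_le _
    have htop : Submodule.span (ZMod 2) (S : Set ((Fin r → ZMod 2) × ZMod 2)) = ⊤ := by
      apply Submodule.eq_top_of_finrank_eq
      rw [hfr]; omega
    have hgood : ∀ a ∈ A', ∀ b ∈ B, (∑ i, a i * b i) = c := by
      intro a ha b hb
      have hker : Submodule.span (ZMod 2) (S : Set ((Fin r → ZMod 2) × ZMod 2)) ≤ LinearMap.ker (lf a c) := by
        rw [Submodule.span_le]
        intro s hs
        exact horth a ha s hs
      have hmem : ((b, 1) : (Fin r → ZMod 2) × ZMod 2) ∈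
          Submodule.span (ZMod 2) (S : Set ((Fin r → ZMod 2) × ZMod 2)) := by
        rw [htop]; exact Submodule.mem_top
      have := hker hmem
      rw [LinearMap.mem_ker] at this
      have h0 : (∑ i, a i * b i) + c = 0 := by simpa [lf] using this
      exact eq_of_add_eq_zero h0
    exact ⟨A', B, Finset.Subset.refl _, Finset.Subset.refl _, hA'ne, hBne, hgood,
      by simp, by push_cast; linarith [(Nat.cast_pos (α := ℝ)).mpr (Finset.card_pos.mpr hBne)]⟩
  | succ k ih =>
    intro A' S hA'ne hrows horth hrank
    set Bgood := B.filter (fun b => ∀ a ∈ A', (∑ i, a i * b i) = c) with hBgood_def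
    by_cases hg : B.card ≤ 2 * Bgood.card
    · refine ⟨A', Bgood, Finset.Subset.refl _, Finset.filter_subset _ _, hA'ne, ?_, ?_, ?_, ?_⟩
      · rw [← Finset.card_pos]
        have := Finset.card_pos.mpr hBne
        omega
      · intro a ha b hb
        exact (Finset.mem_filter.mp hb).2 a ha
      · have h1 : (1-4*ε)^(k+1) ≤ 1 := by
          apply pow_le_one₀ <;> linarith
        have h2 : (0:ℝ) ≤ A'.card := Nat.cast_nonneg _
        nlinarith
      · exact_mod_cast hg
    · set Bbad := B \ Bgood with hBbad_def
      have hBbad_sub : Bbad ⊆ B := Finset.sdiff_subset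
      have hBbad_card : B.card < 2 * Bbad.card := by
        have h1 : Bgood.card + Bbad.card = B.card := by
          have hsub : Bgood ⊆ B := Finset.filter_subset _ _
          have h3 : Bbad.card = B.card - Bgood.card := by
            rw [hBbad_def]; exact Finset.card_sdiff_of_subset hsub
          have h2 : Bgood.card ≤ B.card := Finset.card_le_card hsub
          omega
        omega
      have hBbadne : Bbad.Nonempty := by
        rw [← Finset.card_pos]
        have := Finset.card_pos.mpr hBne
        omega
      -- double counting
      have hswap : ∑ b ∈ Bbad, ((A'.filter (fun a => ¬ (∑ i, a i * b i) = c)).card : ℝ)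
          ≤ 2*ε*B.card*A'.card := by
        have e1 : ∑ b ∈ Bbad, (A'.filter (fun a => ¬ (∑ i, a i * b i) = c)).card
            = ∑ a ∈ A', (Bbad.filter (fun b => ¬ (∑ i, a i * b i) = c)).card := by
          simp only [Finset.card_filter]
          rw [Finset.sum_comm]
        have e2 : ∀ a ∈ A', ((Bbad.filter (fun b => ¬ (∑ i, a i * b i) = c)).card : ℝ)
            ≤ 2*ε*B.card := by
          intro a ha
          refine le_trans ?_ (hrows a ha)
          exact_mod_cast Nat.cast_le.mpr (Finset.card_le_card
            (Finset.filter_subset_filter _ hBbad_sub))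
        calc ∑ b ∈ Bbad, ((A'.filter (fun a => ¬ (∑ i, a i * b i) = c)).card : ℝ)
            = ∑ a ∈ A', ((Bbad.filter (fun b => ¬ (∑ i, a i * b i) = c)).card : ℝ) := by
              rw [← Nat.cast_sum, e1, Nat.cast_sum]
          _ ≤ ∑ _a ∈ A', 2*ε*B.card := Finset.sum_le_sum e2
          _ = 2*ε*B.card*A'.card := by rw [Finset.sum_const, nsmul_eq_mul]; ring
      obtain ⟨b0, hb0bad, hb0⟩ : ∃ b ∈ Bbad,
          ((A'.filter (fun a => ¬ (∑ i, a i * b i) = c)).card : ℝ) ≤ 4*ε*A'.card := by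
        by_contra hcon
        push_neg at hcon
        have hlt : (Bbad.card : ℝ) * (4*ε*A'.card) <
            ∑ b ∈ Bbad, ((A'.filter (fun a => ¬ (∑ i, a i * b i) = c)).card : ℝ) := by
          have h5 := Finset.sum_lt_sum_of_nonempty hBbadne hcon
          rw [Finset.sum_const, nsmul_eq_mul] at h5
          linarith
        have hA'pos : (0:ℝ) < A'.card := by
          exact_mod_cast Finset.card_pos.mpr hA'ne
        have hc : (B.card:ℝ) < 2 * Bbad.card := by exact_mod_cast hBbad_card
        nlinarith [mul_nonneg (mul_nonneg hε0 hA'pos.le) (sub_nonneg.mpr hc.le)]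
      set A2 := A'.filter (fun a => (∑ i, a i * b0 i) = c) with hA2_def
      have hA2card : (1-4*ε) * (A'.card:ℝ) ≤ A2.card := by
        have hsplit : A2.card + (A'.filter (fun a => ¬ (∑ i, a i * b0 i) = c)).card
            = A'.card := Finset.card_filter_add_card_filter_not _
        have : (A2.card:ℝ) + ((A'.filter (fun a => ¬ (∑ i, a i * b0 i) = c)).card : ℝ)
            = A'.card := by exact_mod_cast hsplit
        linarith
      have hA'1 : (1:ℝ) ≤ A'.card := by
        exact_mod_cast Finset.card_pos.mpr hA'ne
      have hA2ne : A2.Nonempty := by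
        rw [← Finset.card_pos, ← Nat.cast_pos (α := ℝ)]
        nlinarith
      have hb0B : b0 ∈ B := hBbad_sub hb0bad
      have hb0notgood : ¬ (∀ a ∈ A', (∑ i, a i * b0 i) = c) := by
        intro hall
        have : b0 ∈ Bgood := Finset.mem_filter.mpr ⟨hb0B, hall⟩
        rw [hBbad_def] at hb0bad
        exact (Finset.mem_sdiff.mp hb0bad).2 this
      have hb0span : ((b0, 1) : (Fin r → ZMod 2) × ZMod 2) ∉
          Submodule.span (ZMod 2) (S : Set ((Fin r → ZMod 2) × ZMod 2)) := by
        intro hmem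
        apply hb0notgood
        intro a ha
        have hker : Submodule.span (ZMod 2) (S : Set ((Fin r → ZMod 2) × ZMod 2)) ≤ LinearMap.ker (lf a c) := by
          rw [Submodule.span_le]; intro s hs; exact horth a ha s hs
        have := hker hmem
        rw [LinearMap.mem_ker] at this
        have h0 : (∑ i, a i * b0 i) + c = 0 := by simpa [lf] using this
        exact eq_of_add_eq_zero h0
      -- apply ih
      have hrank' : r + 1 ≤ Module.finrank (ZMod 2)
          (Submodule.span (ZMod 2) (↑(insert ((b0,1) : (Fin r → ZMod 2) × ZMod 2) S) : Set ((Fin r → ZMod 2) × ZMod 2))) + k := by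
        have hlt : Submodule.span (ZMod 2) (S : Set ((Fin r → ZMod 2) × ZMod 2)) <
            Submodule.span (ZMod 2) (↑(insert ((b0,1) : (Fin r → ZMod 2) × ZMod 2) S) : Set ((Fin r → ZMod 2) × ZMod 2)) := by
          rw [lt_iff_le_and_ne]
          constructor
          · apply Submodule.span_mono
            rw [Finset.coe_insert]
            exact Set.subset_insert _ _
          · intro heq
            apply hb0span
            rw [heq]
            apply Submodule.subset_span
            rw [Finset.coe_insert]
            exact Set.mem_insert _ _
        have := Submodule.finrank_lt_finrank_of_lt hlt
        omega
      obtain ⟨A'', B'', hs1, hs2, hs3, hs4, hs5, hs6, hs7⟩ :=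
        ih A2 (insert (b0,1) S) hA2ne
          (fun a ha => hrows a (Finset.filter_subset _ _ ha))
          (by
            intro a ha s hs
            rcases Finset.mem_insert.mp hs with h | h
            · subst h
              have hac : (∑ i, a i * b0 i) = c := (Finset.mem_filter.mp ha).2
              simp [lf, hac, CharTwo.add_self_eq_zero]
            · exact horth a (Finset.filter_subset _ _ ha) s h)
          hrank'
      refine ⟨A'', B'', hs1.trans (Finset.filter_subset _ _), hs2, hs3, hs4, hs5, ?_, hs7⟩
      have hpk : (0:ℝ) ≤ (1-4*ε)^k := by
        apply pow_nonneg; linarith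
      calc (1-4*ε)^(k+1) * (A'.card:ℝ) = (1-4*ε)^k * ((1-4*ε) * A'.card) := by ring
        _ ≤ (1-4*ε)^k * A2.card := by
            exact mul_le_mul_of_nonneg_left hA2card hpk
        _ ≤ A''.card := hs6



/-- The approximate duality measure of two finite sets `A, B ⊆ 𝔽₂ʳ`:
`|E_{a∈A, b∈B}[(−1)^{⟨a,b⟩}]|`. -/
noncomputable def dualMeasure {r : ℕ} (A B : Finset (Fin r → ZMod 2)) : ℝ :=
  |∑ a ∈ A, ∑ b ∈ B, (if (∑ i, a i * b i) = (0 : ZMod 2) then (1 : ℝ) else -1)| /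
    (A.card * B.card)

/-- For every `α > 0` there exists `ε > 0` such that for every `r ≥ 1`: if nonempty
`A, B ⊆ 𝔽₂ʳ` are `(1−ε)`-approximate dual, then there are nonempty subsets `A' ⊆ A`, `B' ⊆ B`
on which the inner product is constant, with `|A| ≤ 2^{αr}·|A'|` and `|B| ≤ 2^{αr}·|B'|`. -/
theorem weak_approximate_duality :
    ∀ α : ℝ, 0 < α →
      ∃ ε : ℝ, 0 < ε ∧
        ∀ r : ℕ, 1 ≤ r →
          ∀ A B : Finset (Fin r → ZMod 2), A.Nonempty → B.Nonempty →
            1 - ε ≤ dualMeasure A B →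
            ∃ (A' B' : Finset (Fin r → ZMod 2)) (c : ZMod 2),
              A' ⊆ A ∧ B' ⊆ B ∧ A'.Nonempty ∧ B'.Nonempty ∧
              (∀ a ∈ A', ∀ b ∈ B', (∑ i, a i * b i) = c) ∧
              (A.card : ℝ) ≤ 2 ^ (α * r) * A'.card ∧
              (B.card : ℝ) ≤ 2 ^ (α * r) * B'.card := by
  intro α hα
  classical
  set R0 : ℕ := ⌈4/α⌉₊ with hR0_def
  have hR0pos : 0 < R0 := Nat.ceil_pos.mpr (by positivity)
  set ε : ℝ := min (α/100) (1/2^(2*R0+2)) with hε_def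
  have hεpos : 0 < ε := lt_min (by positivity) (by positivity)
  have hεα : ε ≤ α/100 := min_le_left _ _
  have hεR : ε ≤ 1/2^(2*R0+2) := min_le_right _ _
  have hε116 : ε ≤ 1/16 := by
    refine hεR.trans ?_
    rw [div_le_div_iff₀ (by positivity) (by norm_num)]
    have h4 : (2:ℝ)^4 ≤ 2^(2*R0+2) := by
      apply pow_le_pow_right₀ (by norm_num) (by omega)
    norm_num at h4 ⊢
    linarith
  refine ⟨ε, hεpos, ?_⟩
  intro r hr A B hAne hBne hmeas
  have hApos : (0:ℝ) < A.card := by exact_mod_cast Finset.card_pos.mpr hAne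
  have hBpos : (0:ℝ) < B.card := by exact_mod_cast Finset.card_pos.mpr hBne
  set P := ((A ×ˢ B).filter (fun p => (∑ i, p.1 i * p.2 i) = (0:ZMod 2))).card with hP
  set N := ((A ×ˢ B).filter (fun p => ¬ (∑ i, p.1 i * p.2 i) = (0:ZMod 2))).card with hN
  have hPN : P + N = A.card * B.card := by
    rw [hP, hN, Finset.card_filter_add_card_filter_not, Finset.card_product]
  have hSum : (∑ a ∈ A, ∑ b ∈ B, (if (∑ i, a i * b i) = (0:ZMod 2) then (1:ℝ) else -1))
      = (P:ℝ) - N := by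
    rw [← Finset.sum_product']
    rw [Finset.sum_ite, Finset.sum_const, Finset.sum_const]
    simp [nsmul_eq_mul]
    ring
  have habs : (1-ε) * ((A.card:ℝ) * B.card) ≤ |(P:ℝ) - N| := by
    have h := hmeas
    unfold dualMeasure at h
    rw [hSum] at h
    rw [le_div_iff₀ (by positivity)] at h
    exact h
  have hPNr : (P:ℝ) + N = (A.card:ℝ) * B.card := by exact_mod_cast hPN
  obtain ⟨c, hbad⟩ : ∃ c : ZMod 2,
      (((A ×ˢ B).filter (fun p => ¬ (∑ i, p.1 i * p.2 i) = c)).card : ℝ)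
        ≤ ε * ((A.card:ℝ) * B.card) := by
    rcases le_or_gt (N:ℝ) P with h | h
    · refine ⟨0, ?_⟩
      have habs' : |(P:ℝ) - N| = (P:ℝ) - N := abs_of_nonneg (by linarith)
      rw [habs'] at habs
      have hN0 : (0:ℝ) ≤ N := Nat.cast_nonneg _
      show ((N:ℕ):ℝ) ≤ ε * ((A.card:ℝ) * B.card)
      linarith
    · refine ⟨1, ?_⟩
      have hfe : ((A ×ˢ B).filter (fun p => ¬ (∑ i, p.1 i * p.2 i) = (1:ZMod 2)))
          = ((A ×ˢ B).filter (fun p => (∑ i, p.1 i * p.2 i) = (0:ZMod 2))) := by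
        apply Finset.filter_congr
        intro p _
        have hz : ∀ z : ZMod 2, (¬ z = 1) ↔ z = 0 := by decide
        exact hz _
      rw [hfe]
      have habs' : |(P:ℝ) - N| = (N:ℝ) - P := by
        rw [abs_of_nonpos (by linarith)]; ring
      rw [habs'] at habs
      have hP0 : (0:ℝ) ≤ P := Nat.cast_nonneg _
      show ((P:ℕ):ℝ) ≤ ε * ((A.card:ℝ) * B.card)
      linarith
  by_cases hbad0 : ((A ×ˢ B).filter (fun p => ¬ (∑ i, p.1 i * p.2 i) = c)) = ∅
  · have hgood : ∀ a ∈ A, ∀ b ∈ B, (∑ i, a i * b i) = c := by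
      intro a ha b hb
      by_contra hne
      have hmem : ((a,b) : (Fin r → ZMod 2) × (Fin r → ZMod 2)) ∈
          ((A ×ˢ B).filter (fun p => ¬ (∑ i, p.1 i * p.2 i) = c)) :=
        Finset.mem_filter.mpr ⟨Finset.mem_product.mpr ⟨ha, hb⟩, hne⟩
      rw [hbad0] at hmem
      exact absurd hmem (Finset.notMem_empty _)
    have h1 : (1:ℝ) ≤ 2 ^ (α * r) := by
      apply Real.one_le_rpow (by norm_num)
      positivity
    refine ⟨A, B, c, Finset.Subset.refl _, Finset.Subset.refl _, hAne, hBne, hgood, ?_, ?_⟩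
    · nlinarith
    · nlinarith
  · have hbad1 : (1:ℝ) ≤ (((A ×ˢ B).filter (fun p => ¬ (∑ i, p.1 i * p.2 i) = c)).card : ℝ) := by
      have := Finset.card_pos.mpr (Finset.nonempty_of_ne_empty hbad0)
      exact_mod_cast this
    have hcardA : (A.card:ℝ) ≤ 2^r := by
      have h1 : A.card ≤ 2^r := by
        have := Finset.card_le_univ A
        simpa using this
      exact_mod_cast h1
    have hcardB : (B.card:ℝ) ≤ 2^r := by
      have h1 : B.card ≤ 2^r := by
        have := Finset.card_le_univ B
        simpa using this
      exact_mod_cast h1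
    have h2r : 2*R0+2 ≤ 2*r := by
      by_contra hcon
      push_neg at hcon
      have hlt : (2:ℝ)^(2*r) < 2^(2*R0+2) := by
        apply pow_lt_pow_right₀ (by norm_num) (by omega)
      have he1 : (1:ℝ) ≤ ε * ((A.card:ℝ) * B.card) := le_trans hbad1 hbad
      have he2 : ε * ((A.card:ℝ) * B.card) ≤ ε * (2^r * 2^r) := by
        apply mul_le_mul_of_nonneg_left _ hεpos.le
        nlinarith
      have he3 : (2:ℝ)^r * 2^r = 2^(2*r) := by
        rw [← pow_add]; congr 1; omega
      have he4 : ε * (2:ℝ)^(2*r) ≤ (1/2^(2*R0+2)) * 2^(2*r) := by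
        apply mul_le_mul_of_nonneg_right hεR (by positivity)
      have he5 : (1/2^(2*R0+2)) * (2:ℝ)^(2*r) < 1 := by
        rw [div_mul_eq_mul_div, one_mul, div_lt_one (by positivity)]
        exact hlt
      rw [he3] at he2
      linarith
    have hrR0 : R0 + 1 ≤ r := by omega
    have hαr4 : (4:ℝ) ≤ α * r := by
      have h1 : (4:ℝ)/α ≤ R0 := Nat.le_ceil _
      have h2 : (R0:ℝ) ≤ r := by exact_mod_cast Nat.le_of_succ_le hrR0
      rw [div_le_iff₀ hα] at h1
      nlinarith
    -- Markov
    set A0 := A.filter (fun a =>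
      ((B.filter (fun b => ¬ (∑ i, a i * b i) = c)).card : ℝ) ≤ 2*ε*B.card) with hA0_def
    have hbadswap : ∑ a ∈ A, ((B.filter (fun b => ¬ (∑ i, a i * b i) = c)).card:ℝ)
        ≤ ε * ((A.card:ℝ) * B.card) := by
      have e1 : ∑ a ∈ A, (B.filter (fun b => ¬ (∑ i, a i * b i) = c)).card
          = ((A ×ˢ B).filter (fun p => ¬ (∑ i, p.1 i * p.2 i) = c)).card := by
        rw [Finset.card_filter, Finset.sum_product]
        simp only [Finset.card_filter]
      rw [← Nat.cast_sum, e1]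
      exact hbad
    have hA0card : (A.card:ℝ) ≤ 2 * A0.card := by
      set Ab := A.filter (fun a =>
        ¬ ((B.filter (fun b => ¬ (∑ i, a i * b i) = c)).card : ℝ) ≤ 2*ε*B.card) with hAb_def
      have hsplit : A0.card + Ab.card = A.card :=
        Finset.card_filter_add_card_filter_not _
      have hlow : (Ab.card:ℝ) * (2*ε*B.card) ≤ ∑ a ∈ Ab, ((B.filter
          (fun b => ¬ (∑ i, a i * b i) = c)).card:ℝ) := by
        have h1 : ∀ a ∈ Ab, 2*ε*(B.card:ℝ) ≤ ((B.filter
            (fun b => ¬ (∑ i, a i * b i) = c)).card:ℝ) := by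
          intro a ha
          have := (Finset.mem_filter.mp ha).2
          push_neg at this
          exact this.le
        calc (Ab.card:ℝ) * (2*ε*B.card) = ∑ _a ∈ Ab, 2*ε*(B.card:ℝ) := by
              rw [Finset.sum_const, nsmul_eq_mul]
          _ ≤ _ := Finset.sum_le_sum h1
      have hsub : ∑ a ∈ Ab, ((B.filter (fun b => ¬ (∑ i, a i * b i) = c)).card:ℝ)
          ≤ ∑ a ∈ A, ((B.filter (fun b => ¬ (∑ i, a i * b i) = c)).card:ℝ) := by
        apply Finset.sum_le_sum_of_subset_of_nonneg (Finset.filter_subset _ _)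
        intro a _ _
        exact Nat.cast_nonneg _
      have hAbA : (Ab.card:ℝ) ≤ (A.card:ℝ)/2 := by
        have h2 : (Ab.card:ℝ) * (2*ε*B.card) ≤ ε * ((A.card:ℝ) * B.card) :=
          le_trans hlow (le_trans hsub hbadswap)
        have hεB : (0:ℝ) < ε * B.card := mul_pos hεpos hBpos
        have h3 : (2*(Ab.card:ℝ)) * (ε*B.card) ≤ (A.card:ℝ) * (ε*B.card) := by
          nlinarith
        have h4 := (mul_le_mul_iff_left₀ hεB).mp h3
        linarith
      have hcast : (A0.card:ℝ) + Ab.card = A.card := by exact_mod_cast hsplit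
      linarith
    have hA0ne : A0.Nonempty := by
      rw [← Finset.card_pos, ← Nat.cast_pos (α := ℝ)]
      linarith
    obtain ⟨A'', B'', hs1, hs2, hs3, hs4, hs5, hs6, hs7⟩ :=
      core B hBne c ε hεpos.le hε116 (r+1) A0 ∅ hA0ne
        (fun a ha => (Finset.mem_filter.mp ha).2)
        (by intro a _ s hs; exact absurd hs (Finset.notMem_empty _))
        (Nat.le_add_left (r+1) _)
    -- numeric conclusion
    have hexp1 : Real.exp (-(8*ε)) ≤ 1-4*ε := by
      have h1 := Real.add_one_le_exp (8*ε)
      have hp : (0:ℝ) < Real.exp (8*ε) := Real.exp_pos _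
      rw [Real.exp_neg, inv_eq_one_div, div_le_iff₀ hp]
      nlinarith
    have hr1 : (1:ℝ) ≤ r := by exact_mod_cast hr
    have hexp2 : Real.exp (-(16*ε*r)) ≤ (1-4*ε)^(r+1) := by
      have h0 : (0:ℝ) ≤ Real.exp (-(8*ε)) := (Real.exp_pos _).le
      have h1 : Real.exp (-(8*ε))^(r+1) ≤ (1-4*ε)^(r+1) := by
        apply pow_le_pow_left₀ h0 hexp1
      have h2 : Real.exp (-(8*ε))^(r+1) = Real.exp (-(8*ε)*(r+1)) := by
        rw [← Real.exp_nat_mul]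
        congr 1
        push_cast
        ring
      have h3 : Real.exp (-(16*ε*r)) ≤ Real.exp (-(8*ε)*(r+1)) := by
        apply Real.exp_le_exp.mpr
        nlinarith
      rw [h2] at h1
      linarith
    have hA''0 : (0:ℝ) ≤ A''.card := Nat.cast_nonneg _
    have hA0A'' : (A0.card:ℝ) ≤ Real.exp (16*ε*r) * A''.card := by
      have h1 : Real.exp (-(16*ε*r)) * A0.card ≤ A''.card := by
        calc Real.exp (-(16*ε*r)) * (A0.card:ℝ)
            ≤ (1-4*ε)^(r+1) * A0.card := by
              apply mul_le_mul_of_nonneg_right hexp2 (Nat.cast_nonneg _)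
          _ ≤ A''.card := hs6
      have h2 := mul_le_mul_of_nonneg_left h1 (Real.exp_pos (16*ε*r)).le
      rw [← mul_assoc, ← Real.exp_add] at h2
      have h3 : 16*ε*r + -(16*ε*r) = 0 := by ring
      rw [h3, Real.exp_zero, one_mul] at h2
      exact h2
    have hl1 : (0.6931471803:ℝ) < Real.log 2 := Real.log_two_gt_d9
    have hl2 : Real.log 2 < 0.6931471808 := Real.log_two_lt_d9
    have hrpos : (0:ℝ) ≤ r := Nat.cast_nonneg r
    have hkey : 2 * Real.exp (16*ε*r) ≤ Real.exp (Real.log 2 * (α*r)) := by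
      nth_rewrite 1 [show (2:ℝ) = Real.exp (Real.log 2) by rw [Real.exp_log]; norm_num]
      rw [← Real.exp_add]
      apply Real.exp_le_exp.mpr
      have hεr : 16*ε*r ≤ 0.16*(α*r) := by nlinarith
      nlinarith [mul_lt_mul_of_pos_right hl1 (show (0:ℝ) < α*r by linarith)]
    have hrw : (2:ℝ) ^ (α * r) = Real.exp (Real.log 2 * (α*r)) :=
      Real.rpow_def_of_pos (by norm_num) _
    refine ⟨A'', B'', c, hs1.trans (Finset.filter_subset _ _), hs2, hs3, hs4, hs5, ?_, ?_⟩
    · rw [hrw]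
      calc (A.card:ℝ) ≤ 2*A0.card := hA0card
        _ ≤ 2*(Real.exp (16*ε*r)*A''.card) := by linarith
        _ = (2*Real.exp (16*ε*r))*A''.card := by ring
        _ ≤ Real.exp (Real.log 2 * (α*r))*A''.card :=
            mul_le_mul_of_nonneg_right hkey hA''0
    · rw [hrw]
      have h2le : (2:ℝ) ≤ Real.exp (Real.log 2 * (α*r)) := by
        nth_rewrite 1 [show (2:ℝ) = Real.exp (Real.log 2) by rw [Real.exp_log]; norm_num]
        apply Real.exp_le_exp.mpr
        nlinarith
      have hB''0 : (0:ℝ) ≤ B''.card := Nat.cast_nonneg _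
      calc (B.card:ℝ) ≤ 2*B''.card := hs7
        _ ≤ Real.exp (Real.log 2 * (α*r))*B''.card :=
            mul_le_mul_of_nonneg_right h2le hB''0
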